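/- arXiv:2105.07398 — 3 statements merged into one kernel-verified Lean document; each statement's English description precedes it below -/
import Mathlib

section
/- For all Ω > 0, P > 0 and σ_ε² ≥ 0: ∫_{σ_ε²}^{∞} ln(1 + P x) e^{−x/Ω} dx = Ω [ e^{−σ_ε²/Ω} ln(1 + σ_ε² P) + e^{1/(Ω P)} E₁( (1/Ω)(1/P + σ_ε²) ) ], where E₁(z) = ∫_z^{∞} (e^{−t}/t) dt for z > 0. -/
open Real MeasureTheory

/-- The exponential integral `E₁(z) = ∫_z^∞ e^{-t}/t dt`. -/
noncomputable def E1 (z : ℝ) : ℝ := ∫ t in Set.Ioi z, Real.exp (-t) / t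

open Set Filter Topology Asymptotics

private lemma my_parts {a : ℝ} {a' b' : ℝ} {u v u' v' : ℝ → ℝ}
    (hu : ∀ x ∈ Ioi a, HasDerivAt u (u' x) x) (hv : ∀ x ∈ Ioi a, HasDerivAt v (v' x) x)
    (huv' : IntegrableOn (u * v') (Ioi a)) (hu'v : IntegrableOn (u' * v) (Ioi a))
    (h_zero : Tendsto (u * v) (𝓝[>] a) (𝓝 a')) (h_infty : Tendsto (u * v) atTop (𝓝 b')) :
    ∫ (x : ℝ) in Ioi a, u x * v' x = b' - a' - ∫ (x : ℝ) in Ioi a, u' x * v x := by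
  rw [Pi.mul_def] at huv' hu'v
  rw [eq_sub_iff_add_eq, ← integral_add huv' hu'v]
  simpa only [add_comm] using integral_Ioi_deriv_mul_eq_sub hu hv (hu'v.add huv') h_zero h_infty

private lemma shift_Ioi (F : ℝ → ℝ) (a c : ℝ) :
    ∫ x in Set.Ioi a, F (x + c) = ∫ y in Set.Ioi (a + c), F y := by
  have hemb : MeasurableEmbedding (fun x : ℝ => x + c) :=
    (Homeomorph.addRight c).measurableEmbedding
  have hmp : MeasurePreserving (fun x : ℝ => x + c) volume volume :=
    measurePreserving_add_right volume c
  have h := hmp.setIntegral_preimage_emb hemb F (Ioi (a + c))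
  rw [show (fun x : ℝ => x + c) ⁻¹' Ioi (a + c) = Ioi a by
    ext x; simp [Set.mem_Ioi]] at h
  exact h

private lemma tendsto_log_mul_exp (P c : ℝ) (hP : 0 < P) (hc : 0 < c) :
    Tendsto (fun x => Real.log (1 + P * x) * Real.exp (-(c * x))) atTop (𝓝 0) := by
  have hx : Tendsto (fun x => P / c * ((c * x) * Real.exp (-(c * x)))) atTop (𝓝 (P / c * 0)) := by
    refine Tendsto.const_mul _ ?_
    have h1 := tendsto_pow_mul_exp_neg_atTop_nhds_zero 1
    have h2 : Tendsto (fun x : ℝ => c * x) atTop atTop :=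
      tendsto_id.const_mul_atTop hc
    simpa [Function.comp_def] using h1.comp h2
  rw [mul_zero] at hx
  refine squeeze_zero' ?_ ?_ hx
  · filter_upwards [eventually_ge_atTop (0 : ℝ)] with x hx0
    have : (1 : ℝ) ≤ 1 + P * x := by nlinarith
    exact mul_nonneg (Real.log_nonneg this) (Real.exp_pos _).le
  · filter_upwards [eventually_ge_atTop (0 : ℝ)] with x hx0
    have h1 : (0 : ℝ) < 1 + P * x := by nlinarith
    have hlog : Real.log (1 + P * x) ≤ P * x := by
      have := Real.log_le_sub_one_of_pos h1
      linarith
    have : Real.log (1 + P * x) * Real.exp (-(c * x)) ≤ (P * x) * Real.exp (-(c * x)) :=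
      mul_le_mul_of_nonneg_right hlog (Real.exp_pos _).le
    calc Real.log (1 + P * x) * Real.exp (-(c * x)) ≤ (P * x) * Real.exp (-(c * x)) := this
      _ = P / c * ((c * x) * Real.exp (-(c * x))) := by field_simp

private lemma sub_integral (Ω P σe : ℝ) (hΩ : 0 < Ω) (hP : 0 < P) (hσ : 0 ≤ σe) :
    ∫ x in Set.Ioi σe, P / (1 + P * x) * Real.exp (-x / Ω)
      = Real.exp (1 / (Ω * P)) * E1 (1 / Ω * (1 / P + σe)) := by
  have hstep1 : ∫ x in Set.Ioi σe, P / (1 + P * x) * Real.exp (-x / Ω)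
      = Real.exp (1 / (Ω * P)) *
        ∫ x in Set.Ioi σe, (fun y => 1 / y * Real.exp (-y / Ω)) (x + 1 / P) := by
    rw [← MeasureTheory.integral_const_mul]
    refine setIntegral_congr_fun measurableSet_Ioi fun x hx => ?_
    have hx0 : (0 : ℝ) ≤ x := le_trans hσ (le_of_lt hx)
    have h1 : (0 : ℝ) < 1 + P * x := by nlinarith
    have h2 : (0 : ℝ) < x + 1 / P := by positivity
    simp only
    rw [show (1 : ℝ) / (x + 1 / P) = P / (1 + P * x) by
      rw [div_eq_div_iff h2.ne' h1.ne']; field_simp; ring]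
    rw [mul_comm (Real.exp (1 / (Ω * P))), mul_assoc, ← Real.exp_add]
    congr 2
    field_simp
    ring
  rw [hstep1, shift_Ioi (fun y => 1 / y * Real.exp (-y / Ω)) σe (1 / P)]
  congr 1
  -- now: ∫ y in Ioi (σe + 1/P), 1/y * exp (-y/Ω) = E1 (1/Ω * (1/P + σe))
  have hb : (0 : ℝ) < (1 : ℝ) / Ω := by positivity
  have hscale := integral_comp_mul_left_Ioi (fun t => Real.exp (-t) / t) (σe + 1 / P) hb
  have hpt : ∀ y : ℝ, (fun t => Real.exp (-t) / t) (1 / Ω * y)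
      = Ω * (1 / y * Real.exp (-y / Ω)) := by
    intro y
    simp only
    rw [show -(1 / Ω * y) = -y / Ω by ring]
    rcases eq_or_ne y 0 with rfl | hy
    · simp
    · field_simp
  rw [show (∫ x in Ioi (σe + 1 / P), (fun t => Real.exp (-t) / t) (1 / Ω * x))
      = ∫ x in Ioi (σe + 1 / P), Ω * (1 / x * Real.exp (-x / Ω)) from
    setIntegral_congr_fun measurableSet_Ioi fun x _ => hpt x] at hscale
  rw [MeasureTheory.integral_const_mul] at hscale
  have hΩne : Ω ≠ 0 := hΩ.ne'
  have key : (∫ x in Ioi (σe + 1 / P), 1 / x * Real.exp (-x / Ω))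
      = Ω⁻¹ * ((1 / Ω : ℝ)⁻¹ • ∫ t in Ioi (1 / Ω * (σe + 1 / P)), Real.exp (-t) / t) := by
    rw [← hscale]; field_simp
  rw [key, E1, show (1 : ℝ) / Ω * (1 / P + σe) = 1 / Ω * (σe + 1 / P) by ring]
  rw [smul_eq_mul, one_div, inv_inv, inv_mul_cancel_left₀ hΩne]

/-- closed form of `∫_{σ_ε²}^∞ ln(1 + P x) e^{-x/Ω} dx` (the
integral `Ω·𝕁₁(Ω)` of Eq. (9) of the paper). -/
theorem integral_log_mul_exp_Ioi (Ω P σe : ℝ) (hΩ : 0 < Ω) (hP : 0 < P) (hσ : 0 ≤ σe) :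
    ∫ x in Set.Ioi σe, Real.log (1 + P * x) * Real.exp (-x / Ω)
      = Ω * (Real.exp (-σe / Ω) * Real.log (1 + σe * P)
          + Real.exp (1 / (Ω * P)) * E1 (1 / Ω * (1 / P + σe))) := by
  set u : ℝ → ℝ := fun x => Real.log (1 + P * x) with hu_def
  set u' : ℝ → ℝ := fun x => P / (1 + P * x) with hu'_def
  set v : ℝ → ℝ := fun x => -Ω * Real.exp (-x / Ω) with hv_def
  set v' : ℝ → ℝ := fun x => Real.exp (-x / Ω) with hv'_def
  have hpos : ∀ x ∈ Ioi σe, (0 : ℝ) < 1 + P * x := by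
    intro x hx
    have : (0 : ℝ) ≤ x := le_trans hσ (le_of_lt hx)
    nlinarith
  have hu : ∀ x ∈ Ioi σe, HasDerivAt u (u' x) x := by
    intro x hx
    have h1 := hpos x hx
    have : HasDerivAt (fun x : ℝ => 1 + P * x) P x := by
      simpa using ((hasDerivAt_id x).const_mul P).const_add 1
    simpa [hu'_def] using this.log h1.ne'
  have hv : ∀ x ∈ Ioi σe, HasDerivAt v (v' x) x := by
    intro x _
    have h1 : HasDerivAt (fun x : ℝ => -x / Ω) (-1 / Ω) x := by
      simpa using (((hasDerivAt_id x).neg).div_const Ω)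
    have h2 := (h1.exp).const_mul (-Ω)
    exact h2.congr_deriv (by rw [hv'_def]; field_simp)
  have hcont : ContinuousOn (fun x => u x * v' x) (Ici σe) := by
    apply ContinuousOn.mul
    · apply ContinuousOn.log
      · fun_prop
      · intro x hx
        have : (0 : ℝ) ≤ x := le_trans hσ hx
        nlinarith
    · fun_prop
  have hhalf : (0 : ℝ) < 1 / (2 * Ω) := by positivity
  have hbigO : (fun x => u x * v' x) =O[atTop] fun x => Real.exp (-(1 / (2 * Ω)) * x) := by
    apply IsLittleO.isBigO
    apply Asymptotics.isLittleO_of_tendsto (fun x hx => absurd hx (Real.exp_ne_zero _))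
    have hT := tendsto_log_mul_exp P (1 / (2 * Ω)) hP hhalf
    apply hT.congr'
    filter_upwards with x
    rw [hu_def, hv'_def]
    simp only
    rw [eq_div_iff (Real.exp_ne_zero _), mul_assoc, ← Real.exp_add]
    congr 2
    field_simp
    ring
  have huv' : IntegrableOn (fun x => u x * v' x) (Ioi σe) :=
    integrable_of_isBigO_exp_neg hhalf hcont hbigO
  have hcont2 : ContinuousOn (fun x => u' x * v x) (Ici σe) := by
    apply ContinuousOn.mul
    · apply ContinuousOn.div continuousOn_const (by fun_prop)
      intro x hx
      have : (0 : ℝ) ≤ x := le_trans hσ hx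
      nlinarith
    · fun_prop
  have hΩpos : (0 : ℝ) < 1 / Ω := by positivity
  have hbigO2 : (fun x => u' x * v x) =O[atTop] fun x => Real.exp (-(1 / Ω) * x) := by
    apply Asymptotics.IsBigO.of_bound (Ω * P)
    filter_upwards [eventually_ge_atTop (0 : ℝ)] with x hx0
    have h1 : (1 : ℝ) ≤ 1 + P * x := by nlinarith
    have hfrac : P / (1 + P * x) ≤ P := by
      rw [div_le_iff₀ (by linarith)]; nlinarith
    have hfrac0 : 0 ≤ P / (1 + P * x) := by positivity
    have hexp : -(1 / Ω) * x = -x / Ω := by ring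
    rw [hu'_def, hv_def]
    simp only [Real.norm_eq_abs, abs_mul, abs_neg, abs_of_pos hΩ, Real.abs_exp,
      abs_of_nonneg hfrac0, hexp]
    calc P / (1 + P * x) * (Ω * Real.exp (-x / Ω))
        ≤ P * (Ω * Real.exp (-x / Ω)) := by
          apply mul_le_mul_of_nonneg_right hfrac; positivity
      _ = Ω * P * Real.exp (-x / Ω) := by ring
  have hu'v : IntegrableOn (fun x => u' x * v x) (Ioi σe) :=
    integrable_of_isBigO_exp_neg hΩpos hcont2 hbigO2
  have h_zero : Tendsto (u * v) (𝓝[>] σe)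
      (𝓝 (Real.log (1 + P * σe) * (-Ω * Real.exp (-σe / Ω)))) := by
    have h1 : (0 : ℝ) < 1 + P * σe := by nlinarith
    have hc : ContinuousAt (fun x => u x * v x) σe := by
      apply ContinuousAt.mul
      · exact ContinuousAt.log (by fun_prop) h1.ne'
      · fun_prop
    exact hc.tendsto.mono_left nhdsWithin_le_nhds
  have h_infty : Tendsto (u * v) atTop (𝓝 0) := by
    have hT := (tendsto_log_mul_exp P (1 / Ω) hP hΩpos).const_mul (-Ω)
    rw [mul_zero] at hT
    apply hT.congr
    intro x
    rw [hu_def, hv_def]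
    simp only [Pi.mul_apply]
    rw [show -(1 / Ω * x) = -x / Ω by ring]
    ring
  have hparts := my_parts hu hv huv' hu'v h_zero h_infty
  have hu'v_val : (∫ x in Ioi σe, u' x * v x)
      = -Ω * (Real.exp (1 / (Ω * P)) * E1 (1 / Ω * (1 / P + σe))) := by
    have h : (∫ x in Ioi σe, u' x * v x)
        = ∫ x in Ioi σe, -Ω * (P / (1 + P * x) * Real.exp (-x / Ω)) := by
      refine setIntegral_congr_fun measurableSet_Ioi fun x _ => ?_
      rw [hu'_def, hv_def]; ring
    rw [h, MeasureTheory.integral_const_mul, sub_integral Ω P σe hΩ hP hσ]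
  have hmain : (∫ x in Ioi σe, u x * v' x)
      = 0 - Real.log (1 + P * σe) * (-Ω * Real.exp (-σe / Ω))
        - (-Ω * (Real.exp (1 / (Ω * P)) * E1 (1 / Ω * (1 / P + σe)))) := by
    rw [hparts, hu'v_val]
  have hform : (∫ x in Set.Ioi σe, Real.log (1 + P * x) * Real.exp (-x / Ω))
      = ∫ x in Ioi σe, u x * v' x := rfl
  rw [hform, hmain, show (1 : ℝ) + σe * P = 1 + P * σe by ring]
  ring
end

section
/- For all B > 0, c > 0 with B ≠ c, d ≥ 0 and Θ > 0: ∫_{Θ}^{∞} B e^{−(B−c)y} E₁(c y + d) dy = (B/(B−c)) [ e^{−(B−c)Θ} E₁(cΘ + d) − e^{d(B−c)/c} E₁(BΘ + B d/c) ], where E₁(z) = ∫_z^{∞} (e^{−t}/t) dt for z > 0. -/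
open Real MeasureTheory

open Set Filter Topology

lemma integrableOn_expdiv {a : ℝ} (ha : 0 < a) :
    IntegrableOn (fun t => Real.exp (-t) / t) (Set.Ioi a) := by
  have h1 : IntegrableOn (fun t => Real.exp (-t) / a) (Set.Ioi a) := by
    have := (exp_neg_integrableOn_Ioi a (by norm_num : (0:ℝ) < 1)).div_const a
    simpa [IntegrableOn] using this
  refine h1.mono' ?_ ?_
  · exact ((Real.measurable_exp.comp measurable_neg).div measurable_id).aestronglyMeasurable
  · filter_upwards [ae_restrict_mem measurableSet_Ioi] with t ht
    have ht' : a < t := ht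
    have h0 : 0 < t := ha.trans ht'
    rw [Real.norm_eq_abs, abs_of_nonneg (div_nonneg (Real.exp_pos _).le h0.le)]
    gcongr

lemma E1_nonneg {z : ℝ} (hz : 0 < z) : 0 ≤ E1 z :=
  setIntegral_nonneg measurableSet_Ioi fun t ht =>
    div_nonneg (Real.exp_pos _).le (hz.trans ht).le

lemma E1_le {z : ℝ} (hz : 0 < z) : E1 z ≤ Real.exp (-z) / z := by
  have h2 : IntegrableOn (fun t => Real.exp (-t) / z) (Set.Ioi z) := by
    have := (exp_neg_integrableOn_Ioi z (by norm_num : (0:ℝ) < 1)).div_const z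
    simpa [IntegrableOn] using this
  have hle : E1 z ≤ ∫ t in Set.Ioi z, Real.exp (-t) / z := by
    refine setIntegral_mono_on (integrableOn_expdiv hz) h2 measurableSet_Ioi ?_
    intro t ht
    have ht' : z < t := ht
    gcongr
  calc E1 z ≤ ∫ t in Set.Ioi z, Real.exp (-t) / z := hle
    _ = (∫ t in Set.Ioi z, Real.exp (-t)) / z := by rw [integral_div]
    _ = Real.exp (-z) / z := by rw [integral_exp_neg_Ioi]

lemma E1_sub {x y : ℝ} (hx : 0 < x) (hxy : x ≤ y) :
    E1 x = (∫ t in x..y, Real.exp (-t) / t) + E1 y := by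
  have hy : 0 < y := hx.trans_le hxy
  rw [intervalIntegral.integral_of_le hxy]
  have hu : Set.Ioc x y ∪ Set.Ioi y = Set.Ioi x := Set.Ioc_union_Ioi_eq_Ioi hxy
  have hint := integrableOn_expdiv hx
  have h1 : IntegrableOn (fun t => Real.exp (-t) / t) (Set.Ioc x y) :=
    hint.mono_set Set.Ioc_subset_Ioi_self
  have h2 : IntegrableOn (fun t => Real.exp (-t) / t) (Set.Ioi y) :=
    integrableOn_expdiv hy
  have := setIntegral_union (Set.Ioc_disjoint_Ioi le_rfl) measurableSet_Ioi h1 h2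
    (f := fun t => Real.exp (-t) / t) (μ := volume)
  rw [hu] at this
  exact this

lemma hasDerivAt_E1 {z : ℝ} (hz : 0 < z) :
    HasDerivAt E1 (-(Real.exp (-z) / z)) z := by
  set a := z / 2 with ha_def
  have ha : 0 < a := half_pos hz
  have key : ∀ u ∈ Set.Ioi (0:ℝ), E1 u = E1 a - ∫ t in a..u, Real.exp (-t) / t := by
    intro u hu
    have hu' : 0 < u := hu
    rcases le_total a u with h | h
    · have := E1_sub ha h
      linarith [this]
    · have := E1_sub hu' h
      rw [intervalIntegral.integral_symm]
      linarith [this]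
  have hι : IntervalIntegrable (fun t => Real.exp (-t) / t) volume a z := by
    rw [intervalIntegrable_iff, Set.uIoc_of_le (by linarith : a ≤ z)]
    exact (integrableOn_expdiv ha).mono_set Set.Ioc_subset_Ioi_self
  have hcontAt : ContinuousAt (fun t => Real.exp (-t) / t) z :=
    ((Real.continuous_exp.comp continuous_neg).continuousAt).div continuousAt_id hz.ne'
  have hmeas : StronglyMeasurableAtFilter (fun t => Real.exp (-t) / t) (nhds z) :=
    ((Real.measurable_exp.comp measurable_neg).div
      measurable_id).stronglyMeasurable.stronglyMeasurableAtFilter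
  have hD : HasDerivAt (fun u => ∫ t in a..u, Real.exp (-t) / t)
      (Real.exp (-z) / z) z :=
    intervalIntegral.integral_hasDerivAt_right hι hmeas hcontAt
  have hD2 : HasDerivAt (fun u => E1 a - ∫ t in a..u, Real.exp (-t) / t)
      (-(Real.exp (-z) / z)) z := by
    have h := (hasDerivAt_const z (E1 a)).sub hD
    rw [zero_sub] at h
    exact h
  refine hD2.congr_of_eventuallyEq ?_
  filter_upwards [isOpen_Ioi.mem_nhds (show z ∈ Set.Ioi (0:ℝ) from hz)] with u hu
  exact key u hu

lemma tendsto_E1 : Tendsto E1 atTop (𝓝 0) := by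
  have hb : Tendsto (fun z : ℝ => Real.exp (-z) * z⁻¹) atTop (𝓝 0) := by
    simpa using Real.tendsto_exp_neg_atTop_nhds_zero.mul tendsto_inv_atTop_zero
  refine squeeze_zero' ?_ ?_ hb
  · filter_upwards [eventually_gt_atTop (0:ℝ)] with z hz using E1_nonneg hz
  · filter_upwards [eventually_gt_atTop (0:ℝ)] with z hz
    simpa [div_eq_mul_inv] using E1_le hz

/-- `∫_Θ^∞ B e^{-(B-c)y} E₁(cy+d) dy
  = (B/(B-c)) [ e^{-(B-c)Θ} E₁(cΘ+d) − e^{d(B-c)/c} E₁(BΘ + Bd/c) ]`. -/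
theorem integral_exp_mul_E1 (B c d Θ : ℝ) (hB : 0 < B) (hc : 0 < c) (hBc : B ≠ c)
    (hd : 0 ≤ d) (hΘ : 0 < Θ) :
    ∫ y in Set.Ioi Θ, B * Real.exp (-(B - c) * y) * E1 (c * y + d)
      = B / (B - c) * (Real.exp (-(B - c) * Θ) * E1 (c * Θ + d)
          - Real.exp (d * (B - c) / c) * E1 (B * Θ + B * d / c)) := by
  have hk : B - c ≠ 0 := sub_ne_zero.mpr hBc
  set H : ℝ → ℝ := fun y => -(B / (B - c)) *
      (Real.exp (-(B - c) * y) * E1 (c * y + d)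
        - Real.exp (d * (B - c) / c) * E1 (B * y + B * d / c)) with hH
  -- derivative of H on positive reals
  have hderiv : ∀ y : ℝ, 0 < y →
      HasDerivAt H (B * Real.exp (-(B - c) * y) * E1 (c * y + d)) y := by
    intro y hy
    have hx1 : 0 < c * y + d := by positivity
    have hx2 : 0 < B * y + B * d / c := by positivity
    have h1 : HasDerivAt (fun y : ℝ => Real.exp (-(B - c) * y))
        (Real.exp (-(B - c) * y) * (-(B - c))) y := by
      have hlin : HasDerivAt (fun y : ℝ => -(B - c) * y) (-(B - c)) y := by
        simpa using (hasDerivAt_id y).const_mul (-(B - c))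
      exact hlin.exp
    have h2 : HasDerivAt (fun y : ℝ => E1 (c * y + d))
        (-(Real.exp (-(c * y + d)) / (c * y + d)) * c) y := by
      have hlin : HasDerivAt (fun y : ℝ => c * y + d) c y := by
        simpa using ((hasDerivAt_id y).const_mul c).add_const d
      exact (hasDerivAt_E1 hx1).comp y hlin
    have h3 : HasDerivAt (fun y : ℝ => E1 (B * y + B * d / c))
        (-(Real.exp (-(B * y + B * d / c)) / (B * y + B * d / c)) * B) y := by
      have hlin : HasDerivAt (fun y : ℝ => B * y + B * d / c) B y := by
        simpa using ((hasDerivAt_id y).const_mul B).add_const (B * d / c)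
      exact (hasDerivAt_E1 hx2).comp y hlin
    have hDH : HasDerivAt H
        (-(B / (B - c)) *
          ((Real.exp (-(B - c) * y) * (-(B - c))) * E1 (c * y + d)
            + Real.exp (-(B - c) * y) * (-(Real.exp (-(c * y + d)) / (c * y + d)) * c)
            - Real.exp (d * (B - c) / c) *
                (-(Real.exp (-(B * y + B * d / c)) / (B * y + B * d / c)) * B))) y := by
      exact (((h1.mul h2).sub (h3.const_mul (Real.exp (d * (B - c) / c)))).const_mul
        (-(B / (B - c))))
    convert hDH using 1
    -- show the derivative expression simplifies
    have e1 : Real.exp (-(B - c) * y) * Real.exp (-(c * y + d))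
        = Real.exp (-(B * y) - d) := by
      rw [← Real.exp_add]; ring_nf
    have e2 : Real.exp (d * (B - c) / c) * Real.exp (-(B * y + B * d / c))
        = Real.exp (-(B * y) - d) := by
      rw [← Real.exp_add]; congr 1; field_simp; ring
    have e3 : c / (c * y + d) = B / (B * y + B * d / c) := by
      rw [div_eq_div_iff hx1.ne' hx2.ne']
      field_simp
    have cancel :
        Real.exp (-(B - c) * y) * (-(Real.exp (-(c * y + d)) / (c * y + d)) * c)
          - Real.exp (d * (B - c) / c) *
              (-(Real.exp (-(B * y + B * d / c)) / (B * y + B * d / c)) * B) = 0 := by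
      have l1 : Real.exp (-(B - c) * y) * (-(Real.exp (-(c * y + d)) / (c * y + d)) * c)
          = -(Real.exp (-(B * y) - d) * (c / (c * y + d))) := by
        rw [← e1]; ring
      have l2 : Real.exp (d * (B - c) / c) *
            (-(Real.exp (-(B * y + B * d / c)) / (B * y + B * d / c)) * B)
          = -(Real.exp (-(B * y) - d) * (B / (B * y + B * d / c))) := by
        rw [← e2]; ring
      rw [l1, l2, e3]
      ring
    have expand :
        ((Real.exp (-(B - c) * y) * (-(B - c))) * E1 (c * y + d)
            + Real.exp (-(B - c) * y) * (-(Real.exp (-(c * y + d)) / (c * y + d)) * c)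
            - Real.exp (d * (B - c) / c) *
                (-(Real.exp (-(B * y + B * d / c)) / (B * y + B * d / c)) * B))
          = (Real.exp (-(B - c) * y) * (-(B - c))) * E1 (c * y + d) := by
      linarith [cancel]
    rw [expand]
    field_simp
  -- continuity at Θ
  have hcont : ContinuousWithinAt H (Set.Ici Θ) Θ :=
    ((hderiv Θ hΘ).continuousAt).continuousWithinAt
  -- pointwise bound on E1 composite, used for integrability and limits
  have hbound : ∀ y : ℝ, 0 < y →
      Real.exp (-(B - c) * y) * E1 (c * y + d) ≤ Real.exp (-(B * y)) / (c * y) := by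
    intro y hy
    have hx1 : 0 < c * y + d := by positivity
    have hcy : 0 < c * y := by positivity
    have h1 : E1 (c * y + d) ≤ Real.exp (-(c * y)) / (c * y) := by
      calc E1 (c * y + d) ≤ Real.exp (-(c * y + d)) / (c * y + d) := E1_le hx1
        _ ≤ Real.exp (-(c * y)) / (c * y) := by
            gcongr
            · linarith
            · linarith
    calc Real.exp (-(B - c) * y) * E1 (c * y + d)
        ≤ Real.exp (-(B - c) * y) * (Real.exp (-(c * y)) / (c * y)) := by
          gcongr
      _ = Real.exp (-(B * y)) / (c * y) := by
          rw [div_eq_mul_inv, div_eq_mul_inv, ← mul_assoc, ← Real.exp_add]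
          ring_nf
  -- integrability of the integrand
  have hint : IntegrableOn
      (fun y => B * Real.exp (-(B - c) * y) * E1 (c * y + d)) (Set.Ioi Θ) := by
    have hg : IntegrableOn (fun y => (B / (c * Θ)) * Real.exp (-B * y)) (Set.Ioi Θ) :=
      (exp_neg_integrableOn_Ioi Θ hB).const_mul _
    refine hg.mono' ?_ ?_
    · have hcontE1 : ContinuousOn E1 (Set.Ioi (0:ℝ)) := fun z hz =>
        ((hasDerivAt_E1 hz).continuousAt).continuousWithinAt
      have : ContinuousOn (fun y => B * Real.exp (-(B - c) * y) * E1 (c * y + d))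
          (Set.Ioi Θ) := by
        apply ContinuousOn.mul
        · exact (continuous_const.mul
            (Real.continuous_exp.comp (continuous_const.mul continuous_id))).continuousOn
        · refine hcontE1.comp
            ((continuous_const.mul continuous_id).add continuous_const).continuousOn ?_
          intro y hy
          have hy' : Θ < y := hy
          have : 0 < c * y + d := by nlinarith
          exact this
      exact this.aestronglyMeasurable measurableSet_Ioi
    · filter_upwards [ae_restrict_mem measurableSet_Ioi] with y hy
      have hy' : Θ < y := hy
      have hy0 : 0 < y := hΘ.trans hy'
      have hx1 : 0 < c * y + d := by positivity
      have hnn : 0 ≤ Real.exp (-(B - c) * y) * E1 (c * y + d) :=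
        mul_nonneg (Real.exp_pos _).le (E1_nonneg hx1)
      rw [Real.norm_eq_abs, mul_assoc, abs_of_nonneg (by positivity)]
      have h1 : Real.exp (-(B - c) * y) * E1 (c * y + d)
          ≤ Real.exp (-(B * y)) / (c * y) := hbound y hy0
      have h2 : Real.exp (-(B * y)) / (c * y) ≤ Real.exp (-(B * y)) / (c * Θ) := by
        gcongr
      calc B * (Real.exp (-(B - c) * y) * E1 (c * y + d))
          ≤ B * (Real.exp (-(B * y)) / (c * Θ)) := by gcongr; linarith
        _ = B / (c * Θ) * Real.exp (-B * y) := by rw [neg_mul]; ring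
  -- limit of H at infinity
  have hT1 : Tendsto (fun y => Real.exp (-(B - c) * y) * E1 (c * y + d)) atTop (𝓝 0) := by
    have hb : Tendsto (fun y : ℝ => Real.exp (-(B * y)) * (c * y)⁻¹) atTop (𝓝 0) := by
      have hA : Tendsto (fun y : ℝ => Real.exp (-(B * y))) atTop (𝓝 0) :=
        Real.tendsto_exp_neg_atTop_nhds_zero.comp (tendsto_id.const_mul_atTop hB)
      have hI : Tendsto (fun y : ℝ => (c * y)⁻¹) atTop (𝓝 0) :=
        (tendsto_id.const_mul_atTop hc).inv_tendsto_atTop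
      simpa using hA.mul hI
    refine squeeze_zero' ?_ ?_ hb
    · filter_upwards [eventually_gt_atTop (0:ℝ)] with y hy
      have : 0 < c * y + d := by positivity
      exact mul_nonneg (Real.exp_pos _).le (E1_nonneg this)
    · filter_upwards [eventually_gt_atTop (0:ℝ)] with y hy
      simpa [div_eq_mul_inv] using hbound y hy
  have hT2 : Tendsto (fun y => E1 (B * y + B * d / c)) atTop (𝓝 0) := by
    have harg : Tendsto (fun y : ℝ => B * y + B * d / c) atTop atTop :=
      tendsto_atTop_add_const_right _ _ (tendsto_id.const_mul_atTop hB)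
    exact tendsto_E1.comp harg
  have hHlim : Tendsto H atTop (𝓝 0) := by
    have h := (hT1.sub (hT2.const_mul (Real.exp (d * (B - c) / c)))).const_mul
      (-(B / (B - c)))
    rw [show (-(B / (B - c)) * ((0:ℝ) - Real.exp (d * (B - c) / c) * 0) : ℝ) = 0 by ring]
      at h
    exact h
  have key := integral_Ioi_of_hasDerivAt_of_tendsto hcont
    (fun y hy => hderiv y (hΘ.trans hy)) hint hHlim
  rw [key, hH]
  ring
end

section
/- (Theorem 3, strong user.) Let X_n, X_f, X_e be mutually independent exponential random variables with means Ω̃_n, Ω̃_f, Ω̃_e > 0. Fix a_s ∈ (0,1), σ_ε² ≥ 0, P_max > 0, and set ĝ_s = σ_ε² + a_s·max(X_n,X_f), ĝ_e = σ_ε² + a_s·X_e. Then E[ max( log₂(1 + ĝ_s P_max) − log₂(1 + ĝ_e P_max), 0 ) ] = log₂(e)·a_s·Σ_{ℓ=1}^{3} [ Â_ℓ Ξ_ℓ 𝕁₁(a_sΞ_ℓ) − Â_ℓ 𝒞̂_e Ξ_{ℓ,e} 𝕁₁(a_sΞ_{ℓ,e}) − 𝒜̂_ℓ Ĉ_e Ξ_{ℓ,e}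 𝕁₁(a_sΞ_{ℓ,e}) ]. -/
open Finset Real MeasureTheory ProbabilityTheory

/-- `𝕁₁(Ω)` of Eq. (9) of the paper. -/
noncomputable def J1 (σe Pmax Ω : ℝ) : ℝ :=
  Real.exp (-σe / Ω) * Real.log (1 + σe * Pmax)
    + Real.exp (1 / (Ω * Pmax)) * E1 (1 / Ω * (1 / Pmax + σe))

/-- `Ξ₁ = Ω̃_n`, `Ξ₂ = Ω̃_{n,f}`, `Ξ₃ = Ω̃_f`. -/
noncomputable def Xi (Ωn Ωf : ℝ) : Fin 3 → ℝ := ![Ωn, (Ωn⁻¹ + Ωf⁻¹)⁻¹, Ωf]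

/-- `Ξ_{ℓ,e} = (Ξ_ℓ⁻¹ + Ω̃_e⁻¹)⁻¹`. -/
noncomputable def Xie (Ωn Ωf Ωe : ℝ) (l : Fin 3) : ℝ := ((Xi Ωn Ωf l)⁻¹ + Ωe⁻¹)⁻¹

/-- The signs `(-1)^{ℓ+1}` for `ℓ = 1, 2, 3`. -/
noncomputable def sgn3 : Fin 3 → ℝ := ![1, -1, 1]

/-- `Â_ℓ = ((-1)^{ℓ+1}/(a_sΞ_ℓ)) e^{σ_ε²/(a_sΞ_ℓ)}`. -/
noncomputable def Ahat (as σe Ωn Ωf : ℝ) (l : Fin 3) : ℝ :=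
  sgn3 l / (as * Xi Ωn Ωf l) * Real.exp (σe / (as * Xi Ωn Ωf l))

/-- `𝒜̂_ℓ = a_sΞ_ℓ Â_ℓ`. -/
noncomputable def AhatCal (as σe Ωn Ωf : ℝ) (l : Fin 3) : ℝ :=
  as * Xi Ωn Ωf l * Ahat as σe Ωn Ωf l

/-- `Ĉ_e = (1/(a_sΩ̃_e)) e^{σ_ε²/(a_sΩ̃_e)}`. -/
noncomputable def Chat (as σe Ωe : ℝ) : ℝ :=
  1 / (as * Ωe) * Real.exp (σe / (as * Ωe))

/-- `𝒞̂_e = a_sΩ̃_e Ĉ_e`. -/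
noncomputable def ChatCal (as σe Ωe : ℝ) : ℝ := as * Ωe * Chat as σe Ωe

/-! ### Auxiliary lemmas -/

lemma aux_denom_pos {as σe P : ℝ} (has : 0 < as) (hσ : 0 ≤ σe) (hP : 0 < P)
    {t : ℝ} (ht : 0 ≤ t) : 0 < 1 + (σe + as * t) * P := by positivity

lemma aux_max_log_eq_integral (as σe P : ℝ) (has : 0 < as) (hσ : 0 ≤ σe) (hP : 0 < P)
    {e m : ℝ} (he : 0 ≤ e) (hm : 0 ≤ m) :
    max (Real.log (1 + (σe + as * m) * P) - Real.log (1 + (σe + as * e) * P)) 0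
      = ∫ t in Set.Ioo e m, as * P / (1 + (σe + as * t) * P) := by
  rcases le_or_gt m e with hme | hem
  · rw [Set.Ioo_eq_empty (by exact fun h => absurd h (not_lt.2 hme)), Measure.restrict_empty,
      integral_zero_measure, max_eq_right]
    have h1 : (1 : ℝ) + (σe + as * m) * P ≤ 1 + (σe + as * e) * P := by
      nlinarith [mul_le_mul_of_nonneg_right (add_le_add_left (mul_le_mul_of_nonneg_left hme has.le) σe) hP.le]
    have := Real.log_le_log (aux_denom_pos has hσ hP hm) h1
    linarith
  · have key : ∫ t in e..m, as * P / (1 + (σe + as * t) * P)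
        = Real.log (1 + (σe + as * m) * P) - Real.log (1 + (σe + as * e) * P) := by
      apply intervalIntegral.integral_eq_sub_of_hasDerivAt
      · intro x hx
        rw [Set.uIcc_of_le hem.le] at hx
        have hx0 : 0 ≤ x := le_trans he hx.1
        have hd : HasDerivAt (fun x : ℝ => 1 + (σe + as * x) * P) (as * P) x := by
          simpa using ((((hasDerivAt_id x).const_mul as).const_add σe).mul_const P).const_add 1
        have := (Real.hasDerivAt_log (ne_of_gt (aux_denom_pos has hσ hP hx0))).comp x hd
        simp only [div_eq_inv_mul]; exact this
      · apply ContinuousOn.intervalIntegrable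
        apply ContinuousOn.div continuousOn_const
        · fun_prop
        · intro x hx
          rw [Set.uIcc_of_le hem.le] at hx
          exact ne_of_gt (aux_denom_pos has hσ hP (le_trans he hx.1))
    rw [← MeasureTheory.integral_Ioc_eq_integral_Ioo, ← intervalIntegral.integral_of_le hem.le, key,
      max_eq_left]
    have h1 : (1 : ℝ) + (σe + as * e) * P ≤ 1 + (σe + as * m) * P := by
      nlinarith [mul_le_mul_of_nonneg_right (add_le_add_left (mul_le_mul_of_nonneg_left hem.le has.le) σe) hP.le]
    have := Real.log_le_log (aux_denom_pos has hσ hP he) h1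
    linarith

lemma aux_expdiv_integrableOn {d : ℝ} (hd : 0 < d) :
    IntegrableOn (fun s => Real.exp (-s) / s) (Set.Ici d) := by
  apply Integrable.mono' (g := fun s => d⁻¹ * Real.exp (-1 * s))
  · exact (integrableOn_Ici_iff_integrableOn_Ioi (by finiteness)).2 ((exp_neg_integrableOn_Ioi d one_pos).const_mul _)
  · apply ContinuousOn.aestronglyMeasurable _ measurableSet_Ici
    apply ContinuousOn.div (by fun_prop) (by fun_prop)
    intro x hx; exact ne_of_gt (lt_of_lt_of_le hd hx)
  · filter_upwards [ae_restrict_mem measurableSet_Ici] with s hs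
    have hs0 : 0 < s := lt_of_lt_of_le hd hs
    rw [Real.norm_eq_abs, abs_of_nonneg (by positivity)]
    rw [div_le_iff₀ hs0, neg_one_mul]
    have h2 : Real.exp (-s) * d ≤ Real.exp (-s) * s :=
      mul_le_mul_of_nonneg_left hs (Real.exp_nonneg _)
    calc Real.exp (-s) = d⁻¹ * (Real.exp (-s) * d) := by field_simp
    _ ≤ d⁻¹ * (Real.exp (-s) * s) := mul_le_mul_of_nonneg_left h2 (inv_nonneg.2 hd.le)
    _ = d⁻¹ * Real.exp (-s) * s := by ring

lemma aux_K_integrable (as σe P b : ℝ) (has : 0 < as) (hσ : 0 ≤ σe) (hP : 0 < P) (hb : 0 < b) :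
    IntegrableOn (fun t => as * P / (1 + (σe + as * t) * P) * Real.exp (-(b * t)))
      (Set.Ioi (0:ℝ)) := by
  apply Integrable.mono' (g := fun t => (as * P) * Real.exp (-b * t))
  · exact (exp_neg_integrableOn_Ioi 0 hb).const_mul _
  · apply ContinuousOn.aestronglyMeasurable _ measurableSet_Ioi
    apply ContinuousOn.mul _ (by fun_prop)
    apply ContinuousOn.div continuousOn_const (by fun_prop)
    intro x hx
    have : (0:ℝ) ≤ x := le_of_lt hx
    positivity
  · filter_upwards [ae_restrict_mem measurableSet_Ioi] with t ht
    have ht0 : (0:ℝ) ≤ t := le_of_lt ht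
    have hden : (0:ℝ) < 1 + (σe + as * t) * P := by positivity
    rw [Real.norm_eq_abs, abs_of_nonneg (by positivity), neg_mul]
    apply mul_le_mul_of_nonneg_right _ (Real.exp_nonneg _)
    rw [div_le_iff₀ hden]
    nlinarith [mul_nonneg (mul_pos has hP).le
      (mul_nonneg (add_nonneg hσ (mul_nonneg has.le ht0)) hP.le)]

lemma aux_K_eq (as σe P b : ℝ) (has : 0 < as) (hσ : 0 ≤ σe) (hP : 0 < P) (hb : 0 < b) :
    ∫ t in Set.Ioi (0:ℝ), as * P / (1 + (σe + as * t) * P) * Real.exp (-(b * t))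
      = Real.exp ((σe + 1/P) * b / as) * E1 ((σe + 1/P) * b / as) := by
  set d : ℝ := (σe + 1/P) * b / as with hd_def
  have hd : 0 < d := by positivity
  have hsub : ∫ t in Set.Ioi (0:ℝ), ((fun s => Real.exp (-s) / s) ∘ (fun t => b * t + d)) t * b
      = ∫ s in Set.Ioi ((fun t : ℝ => b * t + d) 0), Real.exp (-s) / s := by
    apply integral_comp_mul_deriv_Ioi
    · fun_prop
    · exact Filter.tendsto_atTop_add_const_right _ _ (Filter.Tendsto.const_mul_atTop hb Filter.tendsto_id)
    · intro x hx
      exact (by simpa using (((hasDerivAt_id x).const_mul b).add_const d).hasDerivWithinAt :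
        HasDerivWithinAt (fun t => b * t + d) b (Set.Ioi x) x)
    · apply ContinuousOn.div (by fun_prop) (by fun_prop)
      rintro s ⟨x, hx, rfl⟩
      have : (0:ℝ) < x := hx
      positivity
    · apply (aux_expdiv_integrableOn hd).mono_set
      rintro s ⟨x, hx, rfl⟩
      have : (0:ℝ) ≤ x := hx
      simp only [Set.mem_Ici]
      nlinarith
    · rw [integrableOn_Ici_iff_integrableOn_Ioi]
      apply Integrable.mono' (g := fun t => (b/d) * Real.exp (-b * t))
      · exact (exp_neg_integrableOn_Ioi 0 hb).const_mul _
      · apply ContinuousOn.aestronglyMeasurable _ measurableSet_Ioi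
        apply ContinuousOn.mul _ continuousOn_const
        apply ContinuousOn.div (by fun_prop) (by fun_prop)
        intro x hx
        have : (0:ℝ) < x := hx
        positivity
      · filter_upwards [ae_restrict_mem measurableSet_Ioi] with t ht
        have ht0 : (0:ℝ) < t := ht
        have hbtd : 0 < b * t + d := by positivity
        simp only [Function.comp_apply, Real.norm_eq_abs]
        rw [abs_of_nonneg (by positivity)]
        rw [div_mul_eq_mul_div, div_le_iff₀ hbtd]
        have h1 : Real.exp (-(b*t+d)) ≤ Real.exp (-b*t) := by
          apply Real.exp_le_exp.2; nlinarith
        calc Real.exp (-(b*t+d)) * b ≤ Real.exp (-b*t) * b := by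
              apply mul_le_mul_of_nonneg_right h1 hb.le
        _ = (b/d) * Real.exp (-b*t) * d := by field_simp
        _ ≤ (b/d) * Real.exp (-b*t) * (b*t+d) := by
              apply mul_le_mul_of_nonneg_left (by nlinarith) (by positivity)
  have hpt : ∀ t ∈ Set.Ioi (0:ℝ),
      as * P / (1 + (σe + as * t) * P) * Real.exp (-(b * t))
        = Real.exp d * (((fun s => Real.exp (-s) / s) ∘ (fun t => b * t + d)) t * b) := by
    intro t ht
    have ht0 : (0:ℝ) < t := ht
    have hbtd : 0 < b * t + d := by positivity
    have hden : (0:ℝ) < 1 + (σe + as * t) * P := by positivity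
    simp only [Function.comp_apply]
    have hexp : Real.exp (-(b*t)) = Real.exp d * Real.exp (-(b*t+d)) := by
      rw [← Real.exp_add]; ring_nf
    rw [hexp]
    have hden_eq : 1 + (σe + as * t) * P = P * as / b * (b * t + d) := by
      rw [hd_def]; field_simp; ring
    rw [hden_eq]
    field_simp
  rw [setIntegral_congr_fun measurableSet_Ioi hpt, integral_const_mul, hsub]
  simp only [mul_zero, zero_add]
  rfl

lemma aux_combo (as σe P Ξ Ωe b be s : ℝ) (has : 0 < as) (hP : 0 < P)
    (hΞ : 0 < Ξ) (hΩe : 0 < Ωe) (hb : Ξ⁻¹ = b) (hbe : Ωe⁻¹ = be) :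
    as * (s / (as * Ξ) * Real.exp (σe / (as * Ξ)) * Ξ * J1 σe P (as * Ξ)
      - s / (as * Ξ) * Real.exp (σe / (as * Ξ))
          * (as * Ωe * (1 / (as * Ωe) * Real.exp (σe / (as * Ωe))))
          * (Ξ⁻¹ + Ωe⁻¹)⁻¹ * J1 σe P (as * (Ξ⁻¹ + Ωe⁻¹)⁻¹)
      - as * Ξ * (s / (as * Ξ) * Real.exp (σe / (as * Ξ)))
          * (1 / (as * Ωe) * Real.exp (σe / (as * Ωe)))
          * (Ξ⁻¹ + Ωe⁻¹)⁻¹ * J1 σe P (as * (Ξ⁻¹ + Ωe⁻¹)⁻¹))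
    = s * (Real.exp ((σe + 1/P) * b / as) * E1 ((σe + 1/P) * b / as)
         - Real.exp ((σe + 1/P) * (b + be) / as) * E1 ((σe + 1/P) * (b + be) / as)) := by
  subst hb hbe
  have hΞ0 : Ξ ≠ 0 := hΞ.ne'
  have hΩe0 : Ωe ≠ 0 := hΩe.ne'
  have has0 : as ≠ 0 := has.ne'
  have hP0 : P ≠ 0 := hP.ne'
  have hsum : Ξ⁻¹ + Ωe⁻¹ ≠ 0 := by positivity
  rw [J1, J1]
  rw [show (1:ℝ) / (as * Ξ) * (1/P + σe) = (σe + 1/P) * Ξ⁻¹ / as by field_simp; ring]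
  rw [show (1:ℝ) / (as * (Ξ⁻¹ + Ωe⁻¹)⁻¹) * (1/P + σe)
      = (σe + 1/P) * (Ξ⁻¹ + Ωe⁻¹) / as by field_simp; ring]
  rw [show (σe + 1/P) * Ξ⁻¹ / as = σe/(as*Ξ) + 1/(as*Ξ*P) by field_simp]
  rw [show (σe + 1/P) * (Ξ⁻¹ + Ωe⁻¹) / as
      = (σe/(as*Ξ) + σe/(as*Ωe)) + ((Ξ⁻¹ + Ωe⁻¹)/(as*P)) by field_simp]
  rw [show -σe / (as * Ξ) = -(σe/(as*Ξ)) by ring]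
  rw [show -σe / (as * (Ξ⁻¹ + Ωe⁻¹)⁻¹) = -(σe/(as*Ξ) + σe/(as*Ωe)) by field_simp]
  rw [show (1:ℝ) / (as * (Ξ⁻¹ + Ωe⁻¹)⁻¹ * P) = (Ξ⁻¹ + Ωe⁻¹)/(as*P) by
    field_simp]
  rw [show (1:ℝ) / (as * Ξ * P) = 1/(as*Ξ*P) by ring]
  simp only [Real.exp_add, Real.exp_neg]
  have e1 := Real.exp_ne_zero (σe/(as*Ξ))
  have e2 := Real.exp_ne_zero (σe/(as*Ωe))
  field_simp
  ring

lemma aux_expMeasure_Iio_zero (r : ℝ) : expMeasure r (Set.Iio 0) = 0 := by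
  show (volume.withDensity (gammaPDF 1 r)) (Set.Iio 0) = 0
  rw [withDensity_apply _ measurableSet_Iio,
    setLIntegral_congr_fun measurableSet_Iio (fun x hx => gammaPDF_of_neg hx)]
  simp

lemma aux_expMeasure_singleton (r t : ℝ) : expMeasure r {t} = 0 := by
  show (volume.withDensity (gammaPDF 1 r)) {t} = 0
  rw [withDensity_apply _ (measurableSet_singleton t),
    setLIntegral_measure_zero _ _ (by simp)]

lemma aux_expMeasure_Iic {r : ℝ} (hr : 0 < r) {t : ℝ} (ht : 0 ≤ t) :
    expMeasure r (Set.Iic t) = ENNReal.ofReal (1 - Real.exp (-(r * t))) := by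
  have : IsProbabilityMeasure (expMeasure r) := isProbabilityMeasure_expMeasure hr
  rw [← ProbabilityTheory.ofReal_cdf]
  rw [cdf_expMeasure_eq hr, if_pos ht]

lemma aux_expMeasure_Iio {r : ℝ} (hr : 0 < r) {t : ℝ} (ht : 0 ≤ t) :
    expMeasure r (Set.Iio t) = ENNReal.ofReal (1 - Real.exp (-(r * t))) := by
  rw [← Set.Iic_diff_right, measure_diff_null (aux_expMeasure_singleton r t),
    aux_expMeasure_Iic hr ht]

lemma aux_one_sub_exp_nonneg {x : ℝ} (hx : 0 ≤ x) : 0 ≤ 1 - Real.exp (-x) := by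
  have : Real.exp (-x) ≤ 1 := Real.exp_le_one_iff.2 (by linarith)
  linarith

lemma aux_one_sub_exp_le_one {x : ℝ} (hx : 0 ≤ x) : 1 - Real.exp (-x) ≤ 1 := by
  have := Real.exp_nonneg (-x); linarith

/-- Theorem 3, strong user: asymptotic (`I_p → ∞`) ergodic secrecy
rate of the strong NOMA user, Eq. (13) of the paper. -/
theorem strong_user_asymptotic_esr
    {α : Type*} [MeasureSpace α] [IsProbabilityMeasure (ℙ : Measure α)]
    (X : Fin 3 → α → ℝ) (hmeas : ∀ i, Measurable (X i))
    (Ωn Ωf Ωe : ℝ) (hΩn : 0 < Ωn) (hΩf : 0 < Ωf) (hΩe : 0 < Ωe)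
    (hindep : iIndepFun X ℙ)
    (hdist : ∀ i, Measure.map (X i) ℙ = expMeasure (1 / ![Ωn, Ωf, Ωe] i))
    (as σe Pmax : ℝ) (has0 : 0 < as) (has1 : as < 1) (hσ : 0 ≤ σe) (hPmax : 0 < Pmax) :
    (∫ ω, max
        (Real.logb 2 (1 + (σe + as * max (X 0 ω) (X 1 ω)) * Pmax)
          - Real.logb 2 (1 + (σe + as * X 2 ω) * Pmax)) 0 ∂ℙ)
      = Real.logb 2 (Real.exp 1) * as
          * ∑ l : Fin 3,
              (Ahat as σe Ωn Ωf l * Xi Ωn Ωf l * J1 σe Pmax (as * Xi Ωn Ωf l)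
                - Ahat as σe Ωn Ωf l * ChatCal as σe Ωe * Xie Ωn Ωf Ωe l
                    * J1 σe Pmax (as * Xie Ωn Ωf Ωe l)
                - AhatCal as σe Ωn Ωf l * Chat as σe Ωe * Xie Ωn Ωf Ωe l
                    * J1 σe Pmax (as * Xie Ωn Ωf Ωe l)) := by
  classical
  have hlog2 : (0:ℝ) < Real.log 2 := Real.log_pos one_lt_two
  -- nonnegativity a.e.
  have hnn : ∀ i, ∀ᵐ ω ∂ℙ, 0 ≤ X i ω := by
    intro i
    rw [ae_iff]
    have hset : {ω | ¬ 0 ≤ X i ω} = X i ⁻¹' Set.Iio 0 := by ext ω; simp [not_le]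
    rw [hset, ← Measure.map_apply (hmeas i) measurableSet_Iio, hdist i,
      aux_expMeasure_Iio_zero]
  -- Step 1: reduce logb to log
  have hVmeas : Measurable (fun ω => max
      (Real.log (1 + (σe + as * max (X 0 ω) (X 1 ω)) * Pmax)
        - Real.log (1 + (σe + as * X 2 ω) * Pmax)) 0) := by
    have hFmeas : Measurable (fun x : ℝ => Real.log (1 + (σe + as * x) * Pmax)) :=
      Real.measurable_log.comp (by fun_prop)
    exact ((hFmeas.comp ((hmeas 0).max (hmeas 1))).sub (hFmeas.comp (hmeas 2))).max
      measurable_const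
  have step1 : (∫ ω, max
        (Real.logb 2 (1 + (σe + as * max (X 0 ω) (X 1 ω)) * Pmax)
          - Real.logb 2 (1 + (σe + as * X 2 ω) * Pmax)) 0 ∂ℙ)
      = (Real.log 2)⁻¹ * ∫ ω, max
        (Real.log (1 + (σe + as * max (X 0 ω) (X 1 ω)) * Pmax)
          - Real.log (1 + (σe + as * X 2 ω) * Pmax)) 0 ∂ℙ := by
    rw [← integral_const_mul]
    apply integral_congr_ae
    apply Filter.Eventually.of_forall
    intro ω
    simp only [Real.logb, div_sub_div_same]
    rw [show (0:ℝ) = 0 / Real.log 2 by simp,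
      max_div_div_right hlog2.le, div_eq_inv_mul]
    simp
  have hconst : Real.logb 2 (Real.exp 1) = (Real.log 2)⁻¹ := by
    simp [Real.logb, Real.log_exp]
  rw [step1, hconst, mul_assoc]
  congr 1
  -- abbreviations (explicit formulas kept)
  -- Step 2: probability of the middle event
  have hm0 : (![Ωn, Ωf, Ωe] : Fin 3 → ℝ) 0 = Ωn := rfl
  have hm1 : (![Ωn, Ωf, Ωe] : Fin 3 → ℝ) 1 = Ωf := rfl
  have hm2 : (![Ωn, Ωf, Ωe] : Fin 3 → ℝ) 2 = Ωe := rfl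
  have hIic : ∀ (i : Fin 3) (t : ℝ), 0 ≤ t →
      ℙ (X i ⁻¹' Set.Iic t) = ENNReal.ofReal (1 - Real.exp (-(1 / (![Ωn, Ωf, Ωe] i) * t))) := by
    intro i t ht
    have hri : 0 < 1 / (![Ωn, Ωf, Ωe] i) := by
      fin_cases i
      · exact (by positivity : (0:ℝ) < 1 / Ωn)
      · exact (by positivity : (0:ℝ) < 1 / Ωf)
      · exact (by positivity : (0:ℝ) < 1 / Ωe)
    rw [← Measure.map_apply (hmeas i) measurableSet_Iic, hdist i, aux_expMeasure_Iic hri ht]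
  have hIio : ∀ (i : Fin 3) (t : ℝ), 0 ≤ t →
      ℙ (X i ⁻¹' Set.Iio t) = ENNReal.ofReal (1 - Real.exp (-(1 / (![Ωn, Ωf, Ωe] i) * t))) := by
    intro i t ht
    have hri : 0 < 1 / (![Ωn, Ωf, Ωe] i) := by
      fin_cases i
      · exact (by positivity : (0:ℝ) < 1 / Ωn)
      · exact (by positivity : (0:ℝ) < 1 / Ωf)
      · exact (by positivity : (0:ℝ) < 1 / Ωe)
    rw [← Measure.map_apply (hmeas i) measurableSet_Iio, hdist i, aux_expMeasure_Iio hri ht]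
  have hA : ∀ t : ℝ, 0 < t →
      ℙ {ω : α | X 2 ω < t ∧ t < max (X 0 ω) (X 1 ω)}
        = ENNReal.ofReal ((1 - Real.exp (-(1/Ωe * t)))
            - (1 - Real.exp (-(1/Ωn * t))) * (1 - Real.exp (-(1/Ωf * t)))
              * (1 - Real.exp (-(1/Ωe * t)))) := by
    intro t ht
    set s : Fin 3 → Set α := fun i => X i ⁻¹' (![Set.Iic t, Set.Iic t, Set.Iio t] i) with hs_def
    have hprod : ℙ (⋂ i, s i) = ∏ i, ℙ (s i) := by
      apply hindep.meas_iInter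
      intro i
      refine ⟨![Set.Iic t, Set.Iic t, Set.Iio t] i, ?_, rfl⟩
      fin_cases i
      · exact measurableSet_Iic
      · exact measurableSet_Iic
      · exact measurableSet_Iio
    have hsetmeas : ∀ i, MeasurableSet (s i) := by
      intro i
      apply (hmeas i)
      fin_cases i
      · exact measurableSet_Iic
      · exact measurableSet_Iic
      · exact measurableSet_Iio
    have hseteq : {ω : α | X 2 ω < t ∧ t < max (X 0 ω) (X 1 ω)}
        = (X 2 ⁻¹' Set.Iio t) \ (⋂ i, s i) := by
      ext ω
      simp only [Set.mem_setOf_eq, Set.mem_diff, Set.mem_preimage, Set.mem_Iio,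
        Set.mem_iInter, lt_max_iff, hs_def]
      constructor
      · rintro ⟨h2, hmax⟩
        refine ⟨h2, fun h => ?_⟩
        have h0 := h 0
        have h1 := h 1
        simp only [Matrix.cons_val_zero, Matrix.cons_val_one, Matrix.head_cons,
          Set.mem_preimage, Set.mem_Iic] at h0 h1
        rcases hmax with hl | hl
        · exact absurd h0 (not_le.2 hl)
        · exact absurd h1 (not_le.2 hl)
      · rintro ⟨h2, hni⟩
        refine ⟨h2, ?_⟩
        by_contra hc
        push_neg at hc
        apply hni
        intro i
        fin_cases i
        · simpa using hc.1
        · simpa using hc.2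
        · simpa using h2
    rw [hseteq, measure_diff ?_ ((MeasurableSet.iInter hsetmeas).nullMeasurableSet)
      (measure_ne_top _ _), hprod, Fin.prod_univ_three]
    · have e0 : ℙ (s 0) = ENNReal.ofReal (1 - Real.exp (-(1/Ωn * t))) := by
        have := hIic 0 t ht.le
        rw [hm0] at this
        exact this
      have e1 : ℙ (s 1) = ENNReal.ofReal (1 - Real.exp (-(1/Ωf * t))) := by
        have := hIic 1 t ht.le
        rw [hm1] at this
        exact this
      have e2 : ℙ (s 2) = ENNReal.ofReal (1 - Real.exp (-(1/Ωe * t))) := by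
        have := hIio 2 t ht.le
        rw [hm2] at this
        exact this
      have ee : ℙ (X 2 ⁻¹' Set.Iio t) = ENNReal.ofReal (1 - Real.exp (-(1/Ωe * t))) := by
        have := hIio 2 t ht.le
        rw [hm2] at this
        exact this
      rw [e0, e1, e2, ee]
      have hn0 : 0 ≤ 1 - Real.exp (-(1/Ωn * t)) := aux_one_sub_exp_nonneg (by positivity)
      have hf0 : 0 ≤ 1 - Real.exp (-(1/Ωf * t)) := aux_one_sub_exp_nonneg (by positivity)
      have he0 : 0 ≤ 1 - Real.exp (-(1/Ωe * t)) := aux_one_sub_exp_nonneg (by positivity)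
      rw [← ENNReal.ofReal_mul hn0, ← ENNReal.ofReal_mul (mul_nonneg hn0 hf0),
        ← ENNReal.ofReal_sub _ (mul_nonneg (mul_nonneg hn0 hf0) he0)]
    · intro ω hω
      exact Set.mem_iInter.1 hω 2
  -- integrable pieces
  have hbn : (0:ℝ) < 1/Ωn := by positivity
  have hbf : (0:ℝ) < 1/Ωf := by positivity
  have hbe : (0:ℝ) < 1/Ωe := by positivity
  have hKint : ∀ b : ℝ, 0 < b → IntegrableOn
      (fun t => as * Pmax / (1 + (σe + as * t) * Pmax) * Real.exp (-(b * t)))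
      (Set.Ioi (0:ℝ)) := fun b hb => aux_K_integrable as σe Pmax b has0 hσ hPmax hb
  have hfun : ∀ t : ℝ,
      (as * Pmax / (1 + (σe + as * t) * Pmax)) * ((1 - Real.exp (-(1/Ωe * t)))
          - (1 - Real.exp (-(1/Ωn * t))) * (1 - Real.exp (-(1/Ωf * t)))
            * (1 - Real.exp (-(1/Ωe * t))))
      = as * Pmax / (1 + (σe + as * t) * Pmax) * Real.exp (-(1/Ωn * t))
        + as * Pmax / (1 + (σe + as * t) * Pmax) * Real.exp (-(1/Ωf * t))
        - as * Pmax / (1 + (σe + as * t) * Pmax) * Real.exp (-((1/Ωn + 1/Ωf) * t))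
        - as * Pmax / (1 + (σe + as * t) * Pmax) * Real.exp (-((1/Ωn + 1/Ωe) * t))
        - as * Pmax / (1 + (σe + as * t) * Pmax) * Real.exp (-((1/Ωf + 1/Ωe) * t))
        + as * Pmax / (1 + (σe + as * t) * Pmax) * Real.exp (-((1/Ωn + 1/Ωf + 1/Ωe) * t)) := by
    intro t
    rw [show -((1/Ωn + 1/Ωf) * t) = -(1/Ωn * t) + -(1/Ωf * t) by ring, Real.exp_add,
      show -((1/Ωn + 1/Ωe) * t) = -(1/Ωn * t) + -(1/Ωe * t) by ring, Real.exp_add,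
      show -((1/Ωf + 1/Ωe) * t) = -(1/Ωf * t) + -(1/Ωe * t) by ring, Real.exp_add,
      show -((1/Ωn + 1/Ωf + 1/Ωe) * t) = -(1/Ωn * t) + (-(1/Ωf * t) + -(1/Ωe * t)) by ring,
      Real.exp_add, Real.exp_add]
    ring
  have hgq_int : IntegrableOn (fun t =>
      (as * Pmax / (1 + (σe + as * t) * Pmax)) * ((1 - Real.exp (-(1/Ωe * t)))
          - (1 - Real.exp (-(1/Ωn * t))) * (1 - Real.exp (-(1/Ωf * t)))
            * (1 - Real.exp (-(1/Ωe * t)))))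
      (Set.Ioi (0:ℝ)) := by
    rw [show (fun t =>
      (as * Pmax / (1 + (σe + as * t) * Pmax)) * ((1 - Real.exp (-(1/Ωe * t)))
          - (1 - Real.exp (-(1/Ωn * t))) * (1 - Real.exp (-(1/Ωf * t)))
            * (1 - Real.exp (-(1/Ωe * t))))) = _ from funext hfun]
    exact (((((hKint _ hbn).add (hKint _ hbf)).sub (hKint _ (by positivity))).sub
      (hKint _ (by positivity))).sub (hKint _ (by positivity))).add (hKint _ (by positivity))
  -- Step 3: the expectation as a t-integral
  have hmain : (∫ ω, max
        (Real.log (1 + (σe + as * max (X 0 ω) (X 1 ω)) * Pmax)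
          - Real.log (1 + (σe + as * X 2 ω) * Pmax)) 0 ∂ℙ)
      = ∫ t in Set.Ioi (0:ℝ),
          (as * Pmax / (1 + (σe + as * t) * Pmax)) * ((1 - Real.exp (-(1/Ωe * t)))
          - (1 - Real.exp (-(1/Ωn * t))) * (1 - Real.exp (-(1/Ωf * t)))
            * (1 - Real.exp (-(1/Ωe * t)))) := by
    have hnonneg : (0 : α → ℝ) ≤ᶠ[MeasureTheory.ae ℙ] (fun ω => max
        (Real.log (1 + (σe + as * max (X 0 ω) (X 1 ω)) * Pmax)
          - Real.log (1 + (σe + as * X 2 ω) * Pmax)) 0) :=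
      Filter.Eventually.of_forall fun ω => le_max_right _ _
    rw [integral_eq_lintegral_of_nonneg_ae hnonneg hVmeas.aestronglyMeasurable]
    have hSmeas : MeasurableSet {p : α × ℝ | X 2 p.1 < p.2 ∧ p.2 < max (X 0 p.1) (X 1 p.1)} := by
      have hSeq : {p : α × ℝ | X 2 p.1 < p.2 ∧ p.2 < max (X 0 p.1) (X 1 p.1)}
          = {p : α × ℝ | X 2 p.1 < p.2} ∩ {p : α × ℝ | p.2 < max (X 0 p.1) (X 1 p.1)} := rfl
      rw [hSeq]
      exact (measurableSet_lt ((hmeas 2).comp measurable_fst) measurable_snd).inter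
        (measurableSet_lt measurable_snd (((hmeas 0).comp measurable_fst).max
          ((hmeas 1).comp measurable_fst)))
    have hgmeas : Measurable (fun t : ℝ => as * Pmax / (1 + (σe + as * t) * Pmax)) :=
      measurable_const.div (by fun_prop)
    have hcore : ∀ᵐ ω ∂ℙ, ENNReal.ofReal (max
        (Real.log (1 + (σe + as * max (X 0 ω) (X 1 ω)) * Pmax)
          - Real.log (1 + (σe + as * X 2 ω) * Pmax)) 0)
        = ∫⁻ t in Set.Ioi (0:ℝ),
            ENNReal.ofReal (as * Pmax / (1 + (σe + as * t) * Pmax)) * Set.indicator {p : α × ℝ | X 2 p.1 < p.2 ∧ p.2 < max (X 0 p.1) (X 1 p.1)} 1 (ω, t) := by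
      filter_upwards [hnn 0, hnn 1, hnn 2] with ω h0 h1 h2
      have hM : 0 ≤ max (X 0 ω) (X 1 ω) := le_trans h0 (le_max_left _ _)
      rw [aux_max_log_eq_integral as σe Pmax has0 hσ hPmax h2 hM]
      have hcont : ContinuousOn (fun t : ℝ => as * Pmax / (1 + (σe + as * t) * Pmax))
          (Set.Icc (X 2 ω) (max (X 0 ω) (X 1 ω))) := by
        apply ContinuousOn.div continuousOn_const (by fun_prop)
        intro x hx
        have hx0 : (0:ℝ) ≤ x := le_trans h2 hx.1
        exact ne_of_gt (aux_denom_pos has0 hσ hPmax hx0)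
      have hint : IntegrableOn (fun t : ℝ => as * Pmax / (1 + (σe + as * t) * Pmax))
          (Set.Ioo (X 2 ω) (max (X 0 ω) (X 1 ω))) :=
        (hcont.integrableOn_Icc).mono_set Set.Ioo_subset_Icc_self
      have hgnn : (0 : ℝ → ℝ) ≤ᶠ[MeasureTheory.ae
          (MeasureTheory.volume.restrict (Set.Ioo (X 2 ω) (max (X 0 ω) (X 1 ω))))]
          fun t : ℝ => as * Pmax / (1 + (σe + as * t) * Pmax) := by
        filter_upwards [ae_restrict_mem measurableSet_Ioo] with x hx
        have hx0 : (0:ℝ) ≤ x := le_trans h2 hx.1.le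
        exact le_of_lt (div_pos (by positivity) (aux_denom_pos has0 hσ hPmax hx0))
      rw [ofReal_integral_eq_lintegral_ofReal hint hgnn]
      have hIoosub : Set.Ioo (X 2 ω) (max (X 0 ω) (X 1 ω)) ∩ Set.Ioi 0
          = Set.Ioo (X 2 ω) (max (X 0 ω) (X 1 ω)) := by
        apply Set.inter_eq_self_of_subset_left
        intro x hx
        exact lt_of_le_of_lt h2 hx.1
      symm
      calc ∫⁻ t in Set.Ioi (0:ℝ),
            ENNReal.ofReal (as * Pmax / (1 + (σe + as * t) * Pmax))
              * Set.indicator {p : α × ℝ | X 2 p.1 < p.2 ∧ p.2 < max (X 0 p.1) (X 1 p.1)} 1 (ω, t)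
          = ∫⁻ t in Set.Ioi (0:ℝ), (Set.Ioo (X 2 ω) (max (X 0 ω) (X 1 ω))).indicator
              (fun t => ENNReal.ofReal (as * Pmax / (1 + (σe + as * t) * Pmax))) t := by
            apply lintegral_congr fun t => ?_
            simp only [Set.indicator_apply, Set.mem_setOf_eq, Set.mem_Ioo]
            by_cases h : X 2 ω < t ∧ t < max (X 0 ω) (X 1 ω)
            · simp [h]
            · simp [h]
        _ = ∫⁻ t in Set.Ioo (X 2 ω) (max (X 0 ω) (X 1 ω)),
              ENNReal.ofReal (as * Pmax / (1 + (σe + as * t) * Pmax)) := by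
            rw [lintegral_indicator measurableSet_Ioo,
              Measure.restrict_restrict measurableSet_Ioo, hIoosub]
    rw [lintegral_congr_ae hcore]
    have huncur : Measurable (Function.uncurry fun (ω : α) (t : ℝ) =>
        ENNReal.ofReal (as * Pmax / (1 + (σe + as * t) * Pmax)) * Set.indicator {p : α × ℝ | X 2 p.1 < p.2 ∧ p.2 < max (X 0 p.1) (X 1 p.1)} 1 (ω, t)) := by
      apply Measurable.mul
      · exact (hgmeas.comp measurable_snd).ennreal_ofReal
      · exact measurable_one.indicator hSmeas
    rw [lintegral_lintegral_swap huncur.aemeasurable]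
    have hin : ∀ᵐ t ∂(volume.restrict (Set.Ioi (0:ℝ))),
        (∫⁻ ω, ENNReal.ofReal (as * Pmax / (1 + (σe + as * t) * Pmax))
            * Set.indicator {p : α × ℝ | X 2 p.1 < p.2 ∧ p.2 < max (X 0 p.1) (X 1 p.1)} 1 (ω, t) ∂ℙ)
        = ENNReal.ofReal ((as * Pmax / (1 + (σe + as * t) * Pmax)) *
            ((1 - Real.exp (-(1/Ωe * t)))
              - (1 - Real.exp (-(1/Ωn * t))) * (1 - Real.exp (-(1/Ωf * t)))
                * (1 - Real.exp (-(1/Ωe * t))))) := by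
      filter_upwards [ae_restrict_mem measurableSet_Ioi] with t ht
      have hAt : MeasurableSet {ω : α | X 2 ω < t ∧ t < max (X 0 ω) (X 1 ω)} := by
        have h1 : {ω : α | X 2 ω < t ∧ t < max (X 0 ω) (X 1 ω)}
            = {ω : α | X 2 ω < t} ∩ {ω : α | t < max (X 0 ω) (X 1 ω)} := rfl
        rw [h1]
        exact (measurableSet_lt (hmeas 2) measurable_const).inter
          (measurableSet_lt measurable_const ((hmeas 0).max (hmeas 1)))
      have hindrw : (fun ω => Set.indicator
            {p : α × ℝ | X 2 p.1 < p.2 ∧ p.2 < max (X 0 p.1) (X 1 p.1)} (1 : α × ℝ → ENNReal) (ω, t))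
          = {ω : α | X 2 ω < t ∧ t < max (X 0 ω) (X 1 ω)}.indicator (1 : α → ENNReal) := by
        funext ω
        simp only [Set.indicator_apply, Set.mem_setOf_eq, Pi.one_apply]
      rw [lintegral_const_mul _ (by rw [hindrw]; exact measurable_one.indicator hAt)]
      rw [show (fun ω => Set.indicator
            {p : α × ℝ | X 2 p.1 < p.2 ∧ p.2 < max (X 0 p.1) (X 1 p.1)} (1 : α × ℝ → ENNReal) (ω, t))
          = _ from hindrw]
      rw [lintegral_indicator_one hAt, hA t ht]
      rw [← ENNReal.ofReal_mul (le_of_lt (div_pos (by positivity)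
        (aux_denom_pos has0 hσ hPmax (le_of_lt ht))))]
    rw [lintegral_congr_ae hin]
    rw [← ofReal_integral_eq_lintegral_ofReal hgq_int ?_]
    · rw [ENNReal.toReal_ofReal]
      apply setIntegral_nonneg measurableSet_Ioi
      intro t ht
      have ht0 : (0:ℝ) ≤ t := le_of_lt ht
      have hgpos : 0 ≤ as * Pmax / (1 + (σe + as * t) * Pmax) :=
        le_of_lt (div_pos (by positivity) (aux_denom_pos has0 hσ hPmax ht0))
      apply mul_nonneg hgpos
      have hn1 : (1 - Real.exp (-(1/Ωn * t))) * (1 - Real.exp (-(1/Ωf * t))) ≤ 1 :=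
        mul_le_one₀ (aux_one_sub_exp_le_one (by positivity))
          (aux_one_sub_exp_nonneg (by positivity)) (aux_one_sub_exp_le_one (by positivity))
      have he0 : 0 ≤ 1 - Real.exp (-(1/Ωe * t)) := aux_one_sub_exp_nonneg (by positivity)
      nlinarith [mul_le_of_le_one_left he0 hn1]
    · filter_upwards [ae_restrict_mem measurableSet_Ioi] with t ht
      have ht0 : (0:ℝ) ≤ t := le_of_lt ht
      have hgpos : 0 ≤ as * Pmax / (1 + (σe + as * t) * Pmax) :=
        le_of_lt (div_pos (by positivity) (aux_denom_pos has0 hσ hPmax ht0))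
      apply mul_nonneg hgpos
      have hn1 : (1 - Real.exp (-(1/Ωn * t))) * (1 - Real.exp (-(1/Ωf * t))) ≤ 1 :=
        mul_le_one₀ (aux_one_sub_exp_le_one (by positivity))
          (aux_one_sub_exp_nonneg (by positivity)) (aux_one_sub_exp_le_one (by positivity))
      have he0 : 0 ≤ 1 - Real.exp (-(1/Ωe * t)) := aux_one_sub_exp_nonneg (by positivity)
      nlinarith [mul_le_of_le_one_left he0 hn1]
  rw [hmain]
  -- Step 4: split into six integrals and evaluate
  have hsplit : ∫ t in Set.Ioi (0:ℝ),
      (as * Pmax / (1 + (σe + as * t) * Pmax)) * ((1 - Real.exp (-(1/Ωe * t)))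
          - (1 - Real.exp (-(1/Ωn * t))) * (1 - Real.exp (-(1/Ωf * t)))
            * (1 - Real.exp (-(1/Ωe * t))))
      = (Real.exp ((σe + 1/Pmax) * (1/Ωn) / as) * E1 ((σe + 1/Pmax) * (1/Ωn) / as))
        + (Real.exp ((σe + 1/Pmax) * (1/Ωf) / as) * E1 ((σe + 1/Pmax) * (1/Ωf) / as))
        - (Real.exp ((σe + 1/Pmax) * (1/Ωn + 1/Ωf) / as) * E1 ((σe + 1/Pmax) * (1/Ωn + 1/Ωf) / as))
        - (Real.exp ((σe + 1/Pmax) * (1/Ωn + 1/Ωe) / as) * E1 ((σe + 1/Pmax) * (1/Ωn + 1/Ωe) / as))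
        - (Real.exp ((σe + 1/Pmax) * (1/Ωf + 1/Ωe) / as) * E1 ((σe + 1/Pmax) * (1/Ωf + 1/Ωe) / as))
        + (Real.exp ((σe + 1/Pmax) * (1/Ωn + 1/Ωf + 1/Ωe) / as)
            * E1 ((σe + 1/Pmax) * (1/Ωn + 1/Ωf + 1/Ωe) / as)) := by
    rw [integral_congr_ae (Filter.Eventually.of_forall hfun)]
    have i1 := hKint _ hbn
    have i2 := hKint _ hbf
    have i3 := hKint (1/Ωn + 1/Ωf) (by positivity)
    have i4 := hKint (1/Ωn + 1/Ωe) (by positivity)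
    have i5 := hKint (1/Ωf + 1/Ωe) (by positivity)
    have i6 := hKint (1/Ωn + 1/Ωf + 1/Ωe) (by positivity)
    have I12 : IntegrableOn (fun t =>
        as * Pmax / (1 + (σe + as * t) * Pmax) * Real.exp (-(1/Ωn * t))
        + as * Pmax / (1 + (σe + as * t) * Pmax) * Real.exp (-(1/Ωf * t)))
        (Set.Ioi (0:ℝ)) := i1.add i2
    have I123 : IntegrableOn (fun t =>
        as * Pmax / (1 + (σe + as * t) * Pmax) * Real.exp (-(1/Ωn * t))
        + as * Pmax / (1 + (σe + as * t) * Pmax) * Real.exp (-(1/Ωf * t))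
        - as * Pmax / (1 + (σe + as * t) * Pmax) * Real.exp (-((1/Ωn + 1/Ωf) * t)))
        (Set.Ioi (0:ℝ)) := I12.sub i3
    have I1234 : IntegrableOn (fun t =>
        as * Pmax / (1 + (σe + as * t) * Pmax) * Real.exp (-(1/Ωn * t))
        + as * Pmax / (1 + (σe + as * t) * Pmax) * Real.exp (-(1/Ωf * t))
        - as * Pmax / (1 + (σe + as * t) * Pmax) * Real.exp (-((1/Ωn + 1/Ωf) * t))
        - as * Pmax / (1 + (σe + as * t) * Pmax) * Real.exp (-((1/Ωn + 1/Ωe) * t)))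
        (Set.Ioi (0:ℝ)) := I123.sub i4
    have I12345 : IntegrableOn (fun t =>
        as * Pmax / (1 + (σe + as * t) * Pmax) * Real.exp (-(1/Ωn * t))
        + as * Pmax / (1 + (σe + as * t) * Pmax) * Real.exp (-(1/Ωf * t))
        - as * Pmax / (1 + (σe + as * t) * Pmax) * Real.exp (-((1/Ωn + 1/Ωf) * t))
        - as * Pmax / (1 + (σe + as * t) * Pmax) * Real.exp (-((1/Ωn + 1/Ωe) * t))
        - as * Pmax / (1 + (σe + as * t) * Pmax) * Real.exp (-((1/Ωf + 1/Ωe) * t)))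
        (Set.Ioi (0:ℝ)) := I1234.sub i5
    rw [integral_add I12345 i6, integral_sub I1234 i5, integral_sub I123 i4,
      integral_sub I12 i3, integral_add i1 i2]
    rw [aux_K_eq as σe Pmax (1/Ωn) has0 hσ hPmax hbn,
      aux_K_eq as σe Pmax (1/Ωf) has0 hσ hPmax hbf,
      aux_K_eq as σe Pmax (1/Ωn + 1/Ωf) has0 hσ hPmax (by positivity),
      aux_K_eq as σe Pmax (1/Ωn + 1/Ωe) has0 hσ hPmax (by positivity),
      aux_K_eq as σe Pmax (1/Ωf + 1/Ωe) has0 hσ hPmax (by positivity),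
      aux_K_eq as σe Pmax (1/Ωn + 1/Ωf + 1/Ωe) has0 hσ hPmax (by positivity)]
  rw [hsplit]
  -- Step 5: final algebra
  have hXi1 : (0:ℝ) < (Ωn⁻¹ + Ωf⁻¹)⁻¹ := by positivity
  have c1 := aux_combo as σe Pmax Ωn Ωe (1/Ωn) (1/Ωe) 1 has0 hPmax hΩn hΩe
    (by rw [one_div]) (by rw [one_div])
  have c2 := aux_combo as σe Pmax ((Ωn⁻¹ + Ωf⁻¹)⁻¹) Ωe (1/Ωn + 1/Ωf) (1/Ωe) (-1) has0 hPmax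
    hXi1 hΩe (by rw [inv_inv, one_div, one_div]) (by rw [one_div])
  have c3 := aux_combo as σe Pmax Ωf Ωe (1/Ωf) (1/Ωe) 1 has0 hPmax hΩf hΩe
    (by rw [one_div]) (by rw [one_div])
  rw [Fin.sum_univ_three]
  simp only [Ahat, AhatCal, Chat, ChatCal, Xi, Xie, sgn3, Matrix.cons_val_zero,
    Matrix.cons_val_one, Matrix.head_cons, Matrix.cons_val_two, Matrix.tail_cons]
  linear_combination -c1 - c2 - c3
end
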